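/- Every strictly singular bounded linear operator from c₀ into a Banach space Y is compact; equivalently, every non-compact bounded operator T : c₀ → Y is an isomorphism (bounded below) on some infinite-dimensional closed subspace of c₀ isomorphic to c₀. -/

import Mathlib

open ZeroAtInfty Filter Topology

namespace C0Pel

noncomputable def mk0 (f : ℕ → ℂ) (hf : Tendsto f atTop (𝓝 0)) : C₀(ℕ, ℂ) :=
  ⟨⟨f, continuous_of_discreteTopology⟩, by rwa [cocompact_eq_atTop]⟩

@[simp] lemma mk0_apply (f : ℕ → ℂ) (hf) (i : ℕ) : mk0 f hf i = f i := rfl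

lemma norm_apply_le (x : C₀(ℕ, ℂ)) (i : ℕ) : ‖x i‖ ≤ ‖x‖ := by
  rw [← ZeroAtInftyContinuousMap.norm_toBCF_eq_norm]
  exact BoundedContinuousFunction.norm_coe_le_norm x.toBCF i

lemma norm_le_c0 (x : C₀(ℕ, ℂ)) {C : ℝ} (hC : 0 ≤ C) (h : ∀ i, ‖x i‖ ≤ C) : ‖x‖ ≤ C := by
  rw [← ZeroAtInftyContinuousMap.norm_toBCF_eq_norm]
  exact (BoundedContinuousFunction.norm_le hC).2 h

lemma norm_smul_c0 (c : ℂ) (v : C₀(ℕ, ℂ)) : ‖c • v‖ = ‖c‖ * ‖v‖ := by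
  rw [← ZeroAtInftyContinuousMap.norm_toBCF_eq_norm, ← ZeroAtInftyContinuousMap.norm_toBCF_eq_norm]
  have h : (c • v).toBCF = c • v.toBCF := rfl
  rw [h, norm_smul]

lemma tendsto_apply_zero (x : C₀(ℕ, ℂ)) : Tendsto (fun i => x i) atTop (𝓝 0) := by
  have := x.zero_at_infty'
  rwa [cocompact_eq_atTop] at this

/-- standard basis vector -/
noncomputable def e (i : ℕ) : C₀(ℕ, ℂ) :=
  mk0 (fun j => if j = i then 1 else 0) (by
    apply tendsto_nhds_of_eventually_eq
    filter_upwards [eventually_gt_atTop i] with j hj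
    simp [Nat.ne_of_gt hj])

@[simp] lemma e_apply (i j : ℕ) : e i j = if j = i then 1 else 0 := rfl

/-- tail truncation as a continuous linear map -/
noncomputable def Q (n : ℕ) : C₀(ℕ, ℂ) →L[ℂ] C₀(ℕ, ℂ) :=
  LinearMap.mkContinuous
    { toFun := fun x => mk0 (fun i => if n ≤ i then x i else 0) (by
        apply squeeze_zero_norm (a := fun i => ‖x i‖)
        · intro i; split <;> simp
        · simpa using (tendsto_apply_zero x).norm )
      map_add' := by
        intro x y; ext i
        simp only [mk0_apply, ZeroAtInftyContinuousMap.coe_add, Pi.add_apply]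
        split_ifs <;> simp
      map_smul' := by
        intro c x; ext i
        simp only [mk0_apply, ZeroAtInftyContinuousMap.coe_smul, Pi.smul_apply, RingHom.id_apply,
          smul_eq_mul]
        split_ifs <;> simp }
    1 (by
      intro x
      simp only [LinearMap.coe_mk, AddHom.coe_mk, one_mul]
      apply norm_le_c0 _ (norm_nonneg x)
      intro i; simp only [mk0_apply]
      split
      · exact norm_apply_le x i
      · simp)

@[simp] lemma Q_apply (n : ℕ) (x : C₀(ℕ, ℂ)) (i : ℕ) :
    Q n x i = if n ≤ i then x i else 0 := rfl

lemma norm_Q_le (n : ℕ) (x : C₀(ℕ, ℂ)) : ‖Q n x‖ ≤ ‖x‖ := by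
  apply norm_le_c0 _ (norm_nonneg x)
  intro i; simp only [Q_apply]; split
  · exact norm_apply_le x i
  · simp

/-- head truncation -/
noncomputable def P (n : ℕ) : C₀(ℕ, ℂ) →L[ℂ] C₀(ℕ, ℂ) :=
  ContinuousLinearMap.id ℂ _ - Q n

@[simp] lemma P_apply (n : ℕ) (x : C₀(ℕ, ℂ)) (i : ℕ) :
    P n x i = if n ≤ i then 0 else x i := by
  show x i - Q n x i = _
  simp only [Q_apply]; split <;> simp

/-- a nonzero element of c₀ attains its norm -/
lemma exists_norm_apply_eq (x : C₀(ℕ, ℂ)) (hx : x ≠ 0) : ∃ i, ‖x i‖ = ‖x‖ := by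
  have hpos : 0 < ‖x‖ := norm_pos_iff.2 hx
  have hev : ∀ᶠ i in atTop, ‖x i‖ < ‖x‖ / 2 := by
    have := (tendsto_apply_zero x).norm
    have h2 : Tendsto (fun i => ‖x i‖) atTop (𝓝 0) := by simpa using this
    exact h2.eventually (eventually_lt_nhds (by linarith : (0:ℝ) < ‖x‖/2))
  obtain ⟨N, hN⟩ := hev.exists_forall_of_atTop
  by_cases hN' : N = 0
  · exfalso
    have : ‖x‖ ≤ ‖x‖ / 2 := norm_le_c0 x (by linarith) fun i => (hN i (hN' ▸ Nat.zero_le i)).le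
    linarith
  · have hne : (Finset.range N).Nonempty := Finset.nonempty_range_iff.2 hN'
    obtain ⟨i₀, hi₀mem, hi₀⟩ := Finset.exists_max_image (Finset.range N) (fun i => ‖x i‖) hne
    refine ⟨i₀, le_antisymm (norm_apply_le x i₀) ?_⟩
    have : ‖x‖ ≤ max ‖x i₀‖ (‖x‖ / 2) := by
      apply norm_le_c0 x (le_max_of_le_left (norm_nonneg _))
      intro i
      rcases lt_or_ge i N with h | h
      · exact le_max_of_le_left (hi₀ i (Finset.mem_range.2 h))
      · exact le_max_of_le_right (hN i h).le
    rcases max_cases ‖x i₀‖ (‖x‖/2) with ⟨heq, _⟩ | ⟨heq, _⟩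
    · rwa [heq] at this
    · rw [heq] at this; linarith



variable {Y : Type*} [NormedAddCommGroup Y] [NormedSpace ℂ Y]

lemma P_eq_sum (m : ℕ) (x : C₀(ℕ, ℂ)) :
    P m x = ∑ i ∈ Finset.range m, x i • e i := by
  ext j
  have : (∑ i ∈ Finset.range m, x i • e i) j = ∑ i ∈ Finset.range m, x i • (e i j) := by
    induction (Finset.range m) using Finset.induction_on with
    | empty => simp
    | insert _ _ h ih =>
      rw [Finset.sum_insert h, Finset.sum_insert h, ← ih]
      simp [ZeroAtInftyContinuousMap.coe_add]
  rw [this, P_apply]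
  by_cases hj : m ≤ j
  · rw [if_pos hj]
    refine (Finset.sum_eq_zero ?_).symm
    intro i hi
    have : j ≠ i := by
      have := Finset.mem_range.1 hi; omega
    simp [e_apply, this]
  · rw [if_neg hj]
    rw [Finset.sum_eq_single j]
    · simp
    · intro i hi hne; simp [e_apply, Ne.symm hne]
    · intro h; exact absurd (Finset.mem_range.2 (by omega)) h

lemma isCompactOperator_of_finiteDimensional_range (S : C₀(ℕ, ℂ) →L[ℂ] Y)
    (h : FiniteDimensional ℂ (LinearMap.range (S : C₀(ℕ, ℂ) →ₗ[ℂ] Y))) : IsCompactOperator S := by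
  set R := LinearMap.range (S : C₀(ℕ, ℂ) →ₗ[ℂ] Y)
  refine ⟨(↑) '' Metric.closedBall (0 : R) ‖S‖, ?_, ?_⟩
  · exact ((ProperSpace.isCompact_closedBall _ _)).image continuous_subtype_val
  · refine Filter.mem_of_superset (Metric.ball_mem_nhds 0 one_pos) ?_
    intro x hx
    refine ⟨⟨S x, LinearMap.mem_range_self _ x⟩, ?_, rfl⟩
    simp only [Metric.mem_closedBall, dist_zero_right]
    calc (‖(⟨S x, _⟩ : R)‖) = ‖S x‖ := rfl
    _ ≤ ‖S‖ * ‖x‖ := S.le_opNorm x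
    _ ≤ ‖S‖ * 1 := by
        have := mem_ball_zero_iff.1 hx
        exact mul_le_mul_of_nonneg_left (le_of_lt this) (norm_nonneg S)
    _ = ‖S‖ := mul_one _

lemma isCompactOperator_TP (T : C₀(ℕ, ℂ) →L[ℂ] Y) (m : ℕ) :
    IsCompactOperator (T ∘L P m) := by
  apply isCompactOperator_of_finiteDimensional_range
  have hle : LinearMap.range ((T ∘L P m : C₀(ℕ, ℂ) →L[ℂ] Y) : C₀(ℕ, ℂ) →ₗ[ℂ] Y) ≤
      Submodule.span ℂ (T '' (e '' (Set.Iio m))) := by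
    rintro y ⟨x, rfl⟩
    have : (T ∘L P m) x = ∑ i ∈ Finset.range m, x i • T (e i) := by
      simp only [ContinuousLinearMap.comp_apply, P_eq_sum, map_sum, map_smul]
    rw [ContinuousLinearMap.coe_coe, this]
    apply Submodule.sum_mem
    intro i hi
    exact Submodule.smul_mem _ _ (Submodule.subset_span
      ⟨e i, ⟨i, Finset.mem_range.1 hi, rfl⟩, rfl⟩)
  have : FiniteDimensional ℂ (Submodule.span ℂ (T '' (e '' (Set.Iio m)))) := by
    apply FiniteDimensional.span_of_finite
    exact ((Set.finite_Iio m).image e).image T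
  exact Submodule.finiteDimensional_of_le hle

/-- Extraction of a uniform tail lower bound from non-compactness. -/
lemma exists_delta (T : C₀(ℕ, ℂ) →L[ℂ] Y) [CompleteSpace Y] (hT : ¬ IsCompactOperator T) :
    ∃ δ > (0:ℝ), ∀ n : ℕ, ∃ x : C₀(ℕ, ℂ), ‖x‖ ≤ 1 ∧ (∀ i, i < n → x i = 0) ∧ δ ≤ ‖T x‖ := by
  by_contra hcon
  push_neg at hcon
  apply hT
  -- for each k, get n k
  have key : ∀ k : ℕ, ∃ m : ℕ, ‖T - T ∘L P m‖ ≤ 1/(k+1) := by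
    intro k
    obtain ⟨m, hm⟩ := hcon (1/(k+1)) (by positivity)
    refine ⟨m, ?_⟩
    apply ContinuousLinearMap.opNorm_le_bound _ (by positivity)
    intro x
    have hQx : (T - T ∘L P m) x = T (Q m x) := by
      simp only [ContinuousLinearMap.sub_apply, ContinuousLinearMap.comp_apply]
      rw [← map_sub]
      congr 1
      have : P m x = x - Q m x := by
        simp [P, ContinuousLinearMap.sub_apply]
      rw [this]
      abel
    rw [hQx]
    by_cases h0 : Q m x = 0
    · rw [h0]; simp; positivity
    · set y : C₀(ℕ, ℂ) := (‖Q m x‖:ℂ)⁻¹ • Q m x with hy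
      have hQnorm : (0:ℝ) < ‖Q m x‖ := norm_pos_iff.2 h0
      have hyn : ‖y‖ = 1 := by
        rw [hy]
        rw [norm_smul_c0]
        simp only [norm_inv, Complex.norm_real, Real.norm_eq_abs, abs_of_pos hQnorm]
        exact inv_mul_cancel₀ hQnorm.ne' 
      have hysupp : ∀ i, i < m → y i = 0 := by
        intro i hi
        rw [hy]
        show (‖Q m x‖:ℂ)⁻¹ * (Q m x i) = 0
        rw [Q_apply, if_neg (by omega)]
        simp
      have := hm y hyn.le hysupp
      have hTy : T y = (‖Q m x‖:ℂ)⁻¹ • T (Q m x) := by rw [hy, map_smul]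
      rw [hTy, norm_smul] at this
      simp only [norm_inv, Complex.norm_real, Real.norm_eq_abs, abs_of_pos hQnorm] at this
      have h1 : ‖T (Q m x)‖ ≤ (1/(k+1)) * ‖Q m x‖ := by
        have h3 : ‖Q m x‖ * (‖Q m x‖⁻¹ * ‖T (Q m x)‖) ≤ ‖Q m x‖ * (1/(k+1)) :=
          mul_le_mul_of_nonneg_left this.le hQnorm.le
        rw [← mul_assoc, mul_inv_cancel₀ hQnorm.ne', one_mul] at h3
        linarith
      calc ‖T (Q m x)‖ ≤ (1/(k+1)) * ‖Q m x‖ := h1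
      _ ≤ (1/(k+1)) * ‖x‖ := by
          apply mul_le_mul_of_nonneg_left (norm_Q_le m x) (by positivity)
  choose n hn using key
  apply isCompactOperator_of_tendsto (l := atTop) (F := fun k => T ∘L P (n k))
  · rw [tendsto_iff_norm_sub_tendsto_zero]
    exact squeeze_zero (fun k => norm_nonneg _) (fun k => by
      rw [norm_sub_rev]; exact hn k) tendsto_one_div_add_atTop_nhds_zero_nat
  · exact Eventually.of_forall fun k => isCompactOperator_TP T (n k)


lemma coe_sum {ι : Type*} (S : Finset ι) (f : ι → C₀(ℕ, ℂ)) (j : ℕ) :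
    (∑ i ∈ S, f i) j = ∑ i ∈ S, f i j := by
  classical
  induction S using Finset.induction_on with
  | empty => simp
  | insert _ _ h ih =>
    rw [Finset.sum_insert h, Finset.sum_insert h, ← ih]
    simp [ZeroAtInftyContinuousMap.coe_add]

lemma tendsto_norm_Q (x : C₀(ℕ, ℂ)) : Tendsto (fun m => ‖Q m x‖) atTop (𝓝 0) := by
  rw [Metric.tendsto_atTop]
  intro ε hε
  have : ∀ᶠ i in atTop, ‖x i‖ < ε/2 := by
    have h2 : Tendsto (fun i => ‖x i‖) atTop (𝓝 0) := by
      simpa using (tendsto_apply_zero x).norm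
    exact h2.eventually (eventually_lt_nhds (by linarith))
  obtain ⟨M, hM⟩ := this.exists_forall_of_atTop
  refine ⟨M, fun m hm => ?_⟩
  rw [Real.dist_eq, sub_zero, abs_of_nonneg (norm_nonneg _)]
  have : ‖Q m x‖ ≤ ε/2 := by
    apply norm_le_c0 _ (by linarith)
    intro i
    rw [Q_apply]
    split
    · exact (hM i (by omega)).le
    · simp; linarith
  linarith

/-- Step: a normalized block supported in `[n, m)` on which `T` is large. -/
lemma exists_block {Y : Type*} [NormedAddCommGroup Y] [NormedSpace ℂ Y]
    (T : C₀(ℕ, ℂ) →L[ℂ] Y) {δ : ℝ} (hδ : 0 < δ)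
    (H : ∀ n : ℕ, ∃ x : C₀(ℕ, ℂ), ‖x‖ ≤ 1 ∧ (∀ i, i < n → x i = 0) ∧ δ ≤ ‖T x‖) (n : ℕ) :
    ∃ (w : C₀(ℕ, ℂ)) (m : ℕ), n < m ∧ ‖w‖ = 1 ∧
      (∀ i, (i < n ∨ m ≤ i) → w i = 0) ∧ δ/2 ≤ ‖T w‖ := by
  obtain ⟨x, hx1, hxsupp, hxT⟩ := H n
  -- choose truncation point
  have hTnorm : (0:ℝ) < ‖T‖ + 1 := by positivity
  have : ∀ᶠ m in atTop, ‖Q m x‖ < δ/(2*(‖T‖+1)) := by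
    exact (tendsto_norm_Q x).eventually (eventually_lt_nhds (by positivity))
  obtain ⟨M, hM⟩ := this.exists_forall_of_atTop
  set m := max M (n+1) with hm
  have hQ : ‖Q m x‖ < δ/(2*(‖T‖+1)) := hM m (le_max_left _ _)
  set w0 : C₀(ℕ, ℂ) := P m x with hw0
  have hw0supp : ∀ i, (i < n ∨ m ≤ i) → w0 i = 0 := by
    intro i hi
    rw [hw0, P_apply]
    rcases hi with hi | hi
    · rw [if_neg (by omega)]; exact hxsupp i hi
    · rw [if_pos hi]
  have hw0norm : ‖w0‖ ≤ 1 := by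
    apply norm_le_c0 _ zero_le_one
    intro i
    rw [hw0, P_apply]
    split
    · simp
    · exact le_trans (norm_apply_le x i) hx1
  have hTQ : ‖T (Q m x)‖ ≤ δ/2 := by
    calc ‖T (Q m x)‖ ≤ ‖T‖ * ‖Q m x‖ := T.le_opNorm _
    _ ≤ (‖T‖+1) * (δ/(2*(‖T‖+1))) := by
        apply mul_le_mul (by linarith) hQ.le (norm_nonneg _) (by linarith)
    _ = δ/2 := by field_simp
  have hw0x : w0 = x - Q m x := by
    ext i
    show P m x i = x i - Q m x i
    rw [P_apply, Q_apply]
    split <;> simp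
  have hTw0 : δ/2 ≤ ‖T w0‖ := by
    rw [hw0x, map_sub]
    calc δ/2 = δ - δ/2 := by ring
    _ ≤ ‖T x‖ - ‖T (Q m x)‖ := by
        have := hxT; linarith
    _ ≤ ‖T x - T (Q m x)‖ := by
        have := norm_sub_norm_le (T x) (T (Q m x)); linarith
  have hw0ne : w0 ≠ 0 := by
    intro h
    rw [h, map_zero, norm_zero] at hTw0
    linarith
  have hw0pos : (0:ℝ) < ‖w0‖ := norm_pos_iff.2 hw0ne
  refine ⟨(‖w0‖:ℂ)⁻¹ • w0, m, lt_of_lt_of_le (Nat.lt_succ_self n) (le_max_right _ _), ?_, ?_, ?_⟩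
  · rw [norm_smul_c0]
    simp only [norm_inv, Complex.norm_real, Real.norm_eq_abs, abs_of_pos hw0pos]
    exact inv_mul_cancel₀ hw0pos.ne'
  · intro i hi
    show (‖w0‖:ℂ)⁻¹ * w0 i = 0
    rw [hw0supp i hi, mul_zero]
  · rw [map_smul, norm_smul]
    simp only [norm_inv, Complex.norm_real, Real.norm_eq_abs, abs_of_pos hw0pos]
    have hinv : (1:ℝ) ≤ ‖w0‖⁻¹ := by
      rw [le_inv_comm₀ one_pos hw0pos]; simpa using hw0norm
    calc δ/2 ≤ ‖T w0‖ := hTw0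
    _ = 1 * ‖T w0‖ := (one_mul _).symm
    _ ≤ ‖w0‖⁻¹ * ‖T w0‖ := by
        apply mul_le_mul_of_nonneg_right hinv (norm_nonneg _)

/-- The full block sequence. -/
lemma exists_blocks {Y : Type*} [NormedAddCommGroup Y] [NormedSpace ℂ Y]
    (T : C₀(ℕ, ℂ) →L[ℂ] Y) {δ : ℝ} (hδ : 0 < δ)
    (H : ∀ n : ℕ, ∃ x : C₀(ℕ, ℂ), ‖x‖ ≤ 1 ∧ (∀ i, i < n → x i = 0) ∧ δ ≤ ‖T x‖) :
    ∃ (u : ℕ → C₀(ℕ, ℂ)) (N : ℕ → ℕ), StrictMono N ∧ (∀ k, ‖u k‖ = 1) ∧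
      (∀ k i, (i < N k ∨ N (k+1) ≤ i) → u k i = 0) ∧ (∀ k, δ/2 ≤ ‖T (u k)‖) := by
  choose w m hm hw1 hsupp hTw using exists_block T hδ H
  set N : ℕ → ℕ := fun k => Nat.rec 0 (fun _ prev => m prev) k with hN
  have hNsucc : ∀ k, N (k+1) = m (N k) := fun k => rfl
  refine ⟨fun k => w (N k), N, strictMono_nat_of_lt_succ (fun k => ?_), fun k => hw1 _,
    fun k i hi => ?_, fun k => hTw _⟩
  · rw [hNsucc]; exact hm (N k)
  · apply hsupp
    rcases hi with hi | hi
    · exact Or.inl hi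
    · right; rwa [hNsucc] at hi

/-- coordinate mass of a functional over a finite set is at most its norm -/
lemma mass_le (g : C₀(ℕ, ℂ) →L[ℂ] ℂ) (S : Finset ℕ) :
    ∑ i ∈ S, ‖g (e i)‖ ≤ ‖g‖ := by
  classical
  set sgn : ℕ → ℂ := fun i => if g (e i) = 0 then 0 else (starRingEnd ℂ) (g (e i)) / ‖g (e i)‖
    with hsgn
  have hsgn_norm : ∀ i, ‖sgn i‖ ≤ 1 := by
    intro i
    rw [hsgn]
    dsimp only
    split
    · simp
    · rename_i h
      rw [norm_div]
      simp only [RingHomIsometric.norm_map]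
      rw [Complex.norm_real, Real.norm_eq_abs, abs_of_nonneg (norm_nonneg _)]
      rw [div_self (norm_ne_zero_iff.2 h)]
  have hsgn_mul : ∀ i, sgn i * g (e i) = (‖g (e i)‖ : ℂ) := by
    intro i
    rw [hsgn]
    dsimp only
    split
    · rename_i h; rw [h, mul_zero]; simp
    · rename_i h
      have h2 : (‖g (e i)‖ : ℂ) ≠ 0 := by
        simpa [Complex.ofReal_eq_zero] using norm_ne_zero_iff.2 h
      rw [div_mul_eq_mul_div, Complex.conj_mul', pow_two, mul_div_assoc, div_self h2, mul_one]
  set v : C₀(ℕ, ℂ) := ∑ i ∈ S, sgn i • e i with hv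
  have hvcoord : ∀ j, v j = if j ∈ S then sgn j else 0 := by
    intro j
    rw [hv, coe_sum]
    by_cases hj : j ∈ S
    · rw [Finset.sum_eq_single j]
      · simp [hj]
      · intro i hi hne
        show sgn i * e i j = 0
        simp [e_apply, hne.symm]
      · intro h; exact absurd hj h
    · rw [if_neg hj]
      apply Finset.sum_eq_zero
      intro i hi
      show sgn i * e i j = 0
      have : j ≠ i := fun h => hj (h ▸ hi)
      simp [e_apply, this]
  have hvnorm : ‖v‖ ≤ 1 := by
    apply norm_le_c0 _ zero_le_one
    intro j
    rw [hvcoord]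
    split
    · exact hsgn_norm j
    · simp
  have hgv : g v = (∑ i ∈ S, ‖g (e i)‖ : ℝ) := by
    rw [hv, map_sum]
    push_cast
    apply Finset.sum_congr rfl
    intro i hi
    rw [map_smul, smul_eq_mul, hsgn_mul]
  calc ∑ i ∈ S, ‖g (e i)‖ = ‖g v‖ := by
        rw [hgv]
        rw [Complex.norm_real, Real.norm_eq_abs, abs_of_nonneg]
        exact Finset.sum_nonneg fun i _ => norm_nonneg _
  _ ≤ ‖g‖ * ‖v‖ := g.le_opNorm v
  _ ≤ ‖g‖ * 1 := mul_le_mul_of_nonneg_left hvnorm (ContinuousLinearMap.opNorm_nonneg g)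
  _ = ‖g‖ := mul_one _

/-- a finitely supported element equals the sum of its coordinates times basis vectors -/
lemma eq_sum_of_support (x : C₀(ℕ, ℂ)) (S : Finset ℕ) (h : ∀ i, i ∉ S → x i = 0) :
    x = ∑ i ∈ S, x i • e i := by
  classical
  ext j
  rw [coe_sum]
  by_cases hj : j ∈ S
  · rw [Finset.sum_eq_single j]
    · simp
    · intro i hi hne
      show x i * e i j = 0
      simp [e_apply, hne.symm]
    · intro h'; exact absurd hj h'
  · rw [h j hj]
    refine (Finset.sum_eq_zero ?_).symm
    intro i hi
    show x i * e i j = 0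
    have : j ≠ i := fun h' => hj (h' ▸ hi)
    simp [e_apply, this]

/-- evaluation of a functional on a finitely supported element -/
lemma eval_finsupp (g : C₀(ℕ, ℂ) →L[ℂ] ℂ) (x : C₀(ℕ, ℂ)) (S : Finset ℕ)
    (h : ∀ i, i ∉ S → x i = 0) : g x = ∑ i ∈ S, x i * g (e i) := by
  conv_lhs => rw [eq_sum_of_support x S h]
  rw [map_sum]
  apply Finset.sum_congr rfl
  intro i _
  rw [map_smul, smul_eq_mul]


lemma selection {q : ℕ → ℕ → ℝ} {qb : ℕ → ℝ} {ε B : ℝ} (hε : 0 < ε)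
    (hq0 : ∀ k j, 0 ≤ q k j)
    (hconv : ∀ j, Tendsto (fun k => q k j) atTop (𝓝 (qb j)))
    (hqb : ∀ j, qb j ≤ ε * (1/2)^(j+1))
    (hsum : ∀ k (F : Finset ℕ), ∑ j ∈ F, q k j ≤ B) :
    ∃ s : ℕ → ℕ, StrictMono s ∧
      (∀ r r', r' < r → q (s r) (s r') ≤ ε * (1/2)^r') ∧
      (∀ (r : ℕ) (F : Finset ℕ), (∀ j ∈ F, r < j) → ∑ r' ∈ F, q (s r) (s r') ≤ ε * (1/2)^r) := by
  classical
  have good : ∀ p : ℕ, ∃ k : ℕ, p < k ∧ (∀ j ≤ p, q k j ≤ ε * (1/2)^j) ∧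
      (∀ F : Finset ℕ, (∀ j ∈ F, k ≤ j) → ∑ j ∈ F, q p j ≤ ε * (1/2)^p) := by
    intro p
    -- first condition: eventual bounds, coordinatewise
    have hev : ∀ j : ℕ, ∃ K : ℕ, ∀ k, K ≤ k → q k j ≤ ε * (1/2)^j := by
      intro j
      have hlt : qb j < ε * (1/2)^j := by
        have := hqb j
        have h2 : ε * (1/2:ℝ)^(j+1) < ε * (1/2)^j := by
          apply mul_lt_mul_of_pos_left _ hε
          apply pow_lt_pow_right_of_lt_one₀ (by norm_num) (by norm_num) (Nat.lt_succ_self j)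
        linarith
      have := (hconv j).eventually (eventually_lt_nhds hlt)
      obtain ⟨K, hK⟩ := this.exists_forall_of_atTop
      exact ⟨K, fun k hk => (hK k hk).le⟩
    choose K hK using hev
    set k₁ := (Finset.range (p+1)).sup K with hk₁
    -- third condition: tail of summable series
    have hsummable : Summable (fun j => q p j) := by
      apply summable_of_sum_le (fun j => hq0 p j) (hsum p)
    have htsum : Tendsto (fun n => ∑ j ∈ Finset.range n, q p j) atTop (𝓝 (∑' j, q p j)) :=
      hsummable.hasSum.tendsto_sum_nat
    have : ∀ᶠ n in atTop, (∑' j, q p j) - ε * (1/2)^p < ∑ j ∈ Finset.range n, q p j := by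
      apply htsum.eventually (eventually_gt_nhds _)
      have : (0:ℝ) < ε * (1/2)^p := by positivity
      linarith
    obtain ⟨k₀, hk₀⟩ := this.exists_forall_of_atTop
    refine ⟨max (max k₀ k₁) p + 1, by omega, ?_, ?_⟩
    · intro j hj
      apply hK j
      calc K j ≤ k₁ := Finset.le_sup (Finset.mem_range.2 (by omega))
      _ ≤ max (max k₀ k₁) p + 1 := by omega
    · intro F hF
      have hdisj : Disjoint F (Finset.range k₀) := by
        rw [Finset.disjoint_left]
        intro j hj hj'
        have := hF j hj
        have := Finset.mem_range.1 hj'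
        omega
      have hsum_union : ∑ j ∈ F, q p j + ∑ j ∈ Finset.range k₀, q p j
          = ∑ j ∈ F ∪ Finset.range k₀, q p j := (Finset.sum_union hdisj).symm
      have hle : ∑ j ∈ F ∪ Finset.range k₀, q p j ≤ ∑' j, q p j :=
        hsummable.sum_le_tsum _ (fun j _ => hq0 p j)
      have := hk₀ k₀ le_rfl
      linarith
  choose next hnext1 hnext2 hnext3 using good
  set s : ℕ → ℕ := fun r => Nat.rec 0 (fun _ prev => next prev) r with hs
  have hss : ∀ r, s (r+1) = next (s r) := fun r => rfl
  have hmono : StrictMono s := by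
    apply strictMono_nat_of_lt_succ
    intro r
    rw [hss]
    exact hnext1 (s r)
  refine ⟨s, hmono, ?_, ?_⟩
  · intro r r' hr
    obtain ⟨rr, rfl⟩ : ∃ rr, r = rr + 1 := ⟨r - 1, by omega⟩
    rw [hss]
    have h1 := hnext2 (s rr) (s r') (hmono.monotone (by omega))
    calc q (next (s rr)) (s r') ≤ ε * (1/2)^(s r') := h1
    _ ≤ ε * (1/2)^r' := by
        apply mul_le_mul_of_nonneg_left _ hε.le
        apply pow_le_pow_of_le_one (by norm_num) (by norm_num) (hmono.le_apply)
  · intro r F hF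
    have h3 := hnext3 (s r) (F.image s) ?_
    · rw [Finset.sum_image (fun a _ b _ h => hmono.injective h)] at h3
      calc ∑ r' ∈ F, q (s r) (s r') ≤ ε * (1/2)^(s r) := h3
      _ ≤ ε * (1/2)^r := by
          apply mul_le_mul_of_nonneg_left _ hε.le
          apply pow_le_pow_of_le_one (by norm_num) (by norm_num) (hmono.le_apply)
    · intro j hj
      obtain ⟨r', hr', rfl⟩ := Finset.mem_image.1 hj
      rw [← hss]
      exact hmono.monotone (hF r' hr')



lemma sum_sum_le {A : ℕ → Finset ℕ} (hA : ∀ r r', r < r' → ∀ i ∈ A r, ∀ j ∈ A r', i < j)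
    (h : ℕ → ℝ) (B : ℝ) (hb : ∀ S : Finset ℕ, ∑ i ∈ S, h i ≤ B) (F : Finset ℕ) :
    ∑ j ∈ F, ∑ i ∈ A j, h i ≤ B := by
  classical
  rw [← Finset.sum_biUnion]
  · exact hb _
  · intro a _ b _ hab
    show Disjoint (A a) (A b)
    rcases lt_or_gt_of_ne hab with hlt | hlt
    · rw [Finset.disjoint_left]
      intro i hi hi'
      exact absurd rfl (hA a b hlt i hi i hi').ne
    · rw [Finset.disjoint_left]
      intro i hi hi'
      exact absurd rfl (hA b a hlt i hi' i hi).ne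

lemma exists_system {Y : Type*} [NormedAddCommGroup Y] [NormedSpace ℂ Y] [CompleteSpace Y]
    (T : C₀(ℕ, ℂ) →L[ℂ] Y) (hT : ¬ IsCompactOperator T) :
    ∃ (δ' : ℝ) (v : ℕ → C₀(ℕ, ℂ)) (g : ℕ → (C₀(ℕ, ℂ) →L[ℂ] ℂ)) (A : ℕ → Finset ℕ),
      0 < δ' ∧ (∀ r, ‖v r‖ = 1) ∧ (∀ r i, i ∉ A r → v r i = 0) ∧
      (∀ r r', r < r' → ∀ i ∈ A r, ∀ j ∈ A r', i < j) ∧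
      (∀ r, δ' ≤ ‖g r (v r)‖) ∧ (∀ r z, ‖g r z‖ ≤ ‖T z‖) ∧
      (∀ (r : ℕ) (F : Finset ℕ), r ∉ F → ∑ r' ∈ F, (∑ i ∈ A r', ‖g r (e i)‖) ≤ δ'/2) := by
  classical
  obtain ⟨δ, hδ, H⟩ := exists_delta T hT
  obtain ⟨u, N, hN, hu1, husupp, huT⟩ := exists_blocks T hδ H
  set δ' := δ/2 with hδ'def
  have hδ' : 0 < δ' := by positivity
  set ε := δ'/8 with hεdef
  have hε : 0 < ε := by positivity
  set A₀ : ℕ → Finset ℕ := fun k => Finset.Ico (N k) (N (k+1)) with hA₀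
  have husupp' : ∀ k i, i ∉ A₀ k → u k i = 0 := by
    intro k i hi
    rw [hA₀] at hi
    simp only [Finset.mem_Ico, not_and_or, not_le, not_lt] at hi
    apply husupp
    omega
  have hord₀ : ∀ a b, a < b → ∀ i ∈ A₀ a, ∀ j ∈ A₀ b, i < j := by
    intro a b hab i hi j hj
    rw [hA₀] at hi hj
    simp only [Finset.mem_Ico] at hi hj
    have : N (a+1) ≤ N b := hN.monotone (by omega)
    omega
  have hTune : ∀ k, T (u k) ≠ 0 := by
    intro k h
    have := huT k
    rw [h, norm_zero] at this
    linarith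
  choose f hf1 hf2 using fun k => exists_dual_vector ℂ (T (u k)) (norm_ne_zero_iff.2 (hTune k))
  set g₀ : ℕ → (C₀(ℕ, ℂ) →L[ℂ] ℂ) := fun k => (f k).comp T with hg₀def
  have hg₀v : ∀ k, δ' ≤ ‖g₀ k (u k)‖ := by
    intro k
    have : g₀ k (u k) = ((‖T (u k)‖ : ℝ) : ℂ) := by
      rw [hg₀def]; exact hf2 k
    rw [this, Complex.norm_real, Real.norm_eq_abs, abs_of_nonneg (norm_nonneg _)]
    exact huT k
  have hg₀z : ∀ k z, ‖g₀ k z‖ ≤ ‖T z‖ := by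
    intro k z
    calc ‖g₀ k z‖ = ‖f k (T z)‖ := rfl
    _ ≤ ‖f k‖ * ‖T z‖ := (f k).le_opNorm _
    _ = ‖T z‖ := by rw [hf1 k, one_mul]
  have hg₀norm : ∀ k, ‖g₀ k‖ ≤ ‖T‖ := by
    intro k
    apply ContinuousLinearMap.opNorm_le_bound _ (norm_nonneg T)
    intro z
    exact (hg₀z k z).trans (T.le_opNorm z)
  have hmass : ∀ k (S : Finset ℕ), ∑ i ∈ S, ‖g₀ k (e i)‖ ≤ ‖T‖ :=
    fun k S => (mass_le (g₀ k) S).trans (hg₀norm k)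
  -- diagonal subsequence
  set κ : ℕ → (ℕ → ℂ) := fun k i => g₀ k (e i) with hκ
  have hκmem : ∀ k, κ k ∈ Set.pi Set.univ (fun _ : ℕ => Metric.closedBall (0:ℂ) ‖T‖) := by
    intro k
    intro i _
    rw [Metric.mem_closedBall, dist_zero_right]
    have := hmass k {i}
    simpa using this
  have hKcompact : IsCompact (Set.pi Set.univ (fun _ : ℕ => Metric.closedBall (0:ℂ) ‖T‖)) :=
    isCompact_univ_pi (fun _ => isCompact_closedBall _ _)
  obtain ⟨cbar, -, φ, hφ, hφconv⟩ := hKcompact.isSeqCompact hκmem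
  have hpt : ∀ i, Tendsto (fun k => κ (φ k) i) atTop (𝓝 (cbar i)) := by
    intro i
    exact (tendsto_pi_nhds.1 hφconv) i
  have hcbarmass : ∀ S : Finset ℕ, ∑ i ∈ S, ‖cbar i‖ ≤ ‖T‖ := by
    intro S
    have htend : Tendsto (fun k => ∑ i ∈ S, ‖κ (φ k) i‖) atTop (𝓝 (∑ i ∈ S, ‖cbar i‖)) :=
      tendsto_finset_sum _ (fun i _ => (hpt i).norm)
    apply le_of_tendsto htend
    filter_upwards with k
    exact hmass (φ k) S
  -- first extraction: small limit masses
  set qbar : ℕ → ℝ := fun j => ∑ i ∈ A₀ j, ‖cbar i‖ with hqbar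
  have hqbar_sum : ∀ F : Finset ℕ, ∑ j ∈ F, qbar j ≤ ‖T‖ :=
    sum_sum_le hord₀ _ _ hcbarmass
  have hqbar_summable : Summable qbar := by
    apply summable_of_sum_le _ hqbar_sum
    intro j
    exact Finset.sum_nonneg (fun i _ => norm_nonneg _)
  have hqbar0 : Tendsto qbar atTop (𝓝 0) := hqbar_summable.tendsto_atTop_zero
  have hqbarφ0 : Tendsto (fun k => qbar (φ k)) atTop (𝓝 0) := hqbar0.comp hφ.tendsto_atTop
  have hevsmall : ∀ r : ℕ, ∀ᶠ k in atTop, qbar (φ k) ≤ ε * (1/2)^(r+1) := by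
    intro r
    exact hqbarφ0.eventually (eventually_le_nhds (by positivity))
  obtain ⟨t, ht, htsmall⟩ := extraction_forall_of_eventually hevsmall
  -- second extraction: the gliding hump selection
  set m : ℕ → ℕ := fun k => φ (t k) with hm
  set q2 : ℕ → ℕ → ℝ := fun k j => ∑ i ∈ A₀ (m j), ‖g₀ (m k) (e i)‖ with hq2
  have hconv2 : ∀ j, Tendsto (fun k => q2 k j) atTop (𝓝 (qbar (m j))) := by
    intro j
    have hF : Tendsto (fun k => ∑ i ∈ A₀ (m j), ‖κ (φ k) i‖) atTop (𝓝 (qbar (m j))) := by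
      have hq : qbar (m j) = ∑ i ∈ A₀ (m j), ‖cbar i‖ := rfl
      rw [hq]
      exact tendsto_finset_sum _ (fun i _ => (hpt i).norm)
    exact hF.comp ht.tendsto_atTop
  have hord₀m : ∀ a b, a < b → ∀ i ∈ A₀ (m a), ∀ j ∈ A₀ (m b), i < j :=
    fun a b hab => hord₀ (m a) (m b) (hφ (ht hab))
  have hsum2 : ∀ k (F : Finset ℕ), ∑ j ∈ F, q2 k j ≤ ‖T‖ := by
    intro k F
    exact sum_sum_le hord₀m _ _ (hmass (m k)) F
  obtain ⟨s, hs, hpast, hfut⟩ := selection (q := q2) (qb := fun j => qbar (m j)) (B := ‖T‖)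
    hε (fun k j => Finset.sum_nonneg (fun i _ => norm_nonneg _)) hconv2 htsmall hsum2
  -- assemble
  refine ⟨δ', fun r => u (m (s r)), fun r => g₀ (m (s r)), fun r => A₀ (m (s r)),
    hδ', fun r => hu1 _, ?_, ?_, fun r => hg₀v _, fun r z => hg₀z _ z, ?_⟩
  · intro r i hi
    exact husupp' _ _ hi
  · intro r r' hr i hi j hj
    exact hord₀m _ _ (hs hr) i hi j hj
  · intro r F hF
    have hsplit : F = F.filter (· < r) ∪ F.filter (r < ·) := by
      ext j
      simp only [Finset.mem_union, Finset.mem_filter]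
      constructor
      · intro hj
        rcases lt_trichotomy j r with h | h | h
        · exact Or.inl ⟨hj, h⟩
        · exact absurd (h ▸ hj) hF
        · exact Or.inr ⟨hj, h⟩
      · rintro (⟨hj, _⟩ | ⟨hj, _⟩) <;> exact hj
    have hdisj : Disjoint (F.filter (· < r)) (F.filter (r < ·)) := by
      rw [Finset.disjoint_left]
      intro j hj hj'
      simp only [Finset.mem_filter] at hj hj'
      omega
    rw [hsplit, Finset.sum_union hdisj]
    have h1 : ∑ r' ∈ F.filter (· < r), ∑ i ∈ A₀ (m (s r')), ‖g₀ (m (s r)) (e i)‖ ≤ 2*ε := by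
      calc ∑ r' ∈ F.filter (· < r), ∑ i ∈ A₀ (m (s r')), ‖g₀ (m (s r)) (e i)‖
          ≤ ∑ r' ∈ F.filter (· < r), ε * (1/2)^r' := by
            apply Finset.sum_le_sum
            intro r' hr'
            exact hpast r r' (Finset.mem_filter.1 hr').2
      _ ≤ ∑ r' ∈ Finset.range r, ε * (1/2:ℝ)^r' := by
            apply Finset.sum_le_sum_of_subset_of_nonneg
            · intro j hj
              simp only [Finset.mem_filter] at hj
              exact Finset.mem_range.2 hj.2
            · intro j _ _; positivity
      _ = ε * ∑ r' ∈ Finset.range r, (1/2:ℝ)^r' := by rw [Finset.mul_sum]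
      _ ≤ ε * 2 := by
            apply mul_le_mul_of_nonneg_left _ hε.le
            exact sum_geometric_two_le r
      _ = 2*ε := by ring
    have h2 : ∑ r' ∈ F.filter (r < ·), ∑ i ∈ A₀ (m (s r')), ‖g₀ (m (s r)) (e i)‖ ≤ ε := by
      calc ∑ r' ∈ F.filter (r < ·), ∑ i ∈ A₀ (m (s r')), ‖g₀ (m (s r)) (e i)‖
          = ∑ r' ∈ F.filter (r < ·), q2 (s r) (s r') := by
            apply Finset.sum_congr rfl
            intro r' _; rfl
      _ ≤ ε * (1/2)^r := by
            apply hfut r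
            intro j hj
            exact (Finset.mem_filter.1 hj).2
      _ ≤ ε * 1 := by
            apply mul_le_mul_of_nonneg_left _ hε.le
            apply pow_le_one₀ (by norm_num) (by norm_num)
      _ = ε := mul_one _
    have h3 : (3:ℝ)*ε ≤ δ'/2 := by
      rw [hεdef]; linarith
    linarith



section Final
variable {Y : Type*} [NormedAddCommGroup Y] [NormedSpace ℂ Y] [CompleteSpace Y]

end Final
end C0Pel

set_option maxHeartbeats 1000000
set_option synthInstance.maxHeartbeats 400000
open C0Pel Filter Topology ZeroAtInfty

/-- Every non-compact bounded operator from `c₀` into a Banach space `Y` is bounded below on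
some infinite-dimensional closed subspace of `c₀` isomorphic to `c₀` (equivalently, every
strictly singular operator from `c₀` is compact). -/
theorem noncompact_c0_operator_isomorphism_on_copy {Y : Type*} [NormedAddCommGroup Y]
    [NormedSpace ℂ Y] [CompleteSpace Y] (T : C₀(ℕ, ℂ) →L[ℂ] Y)
    (hT : ¬ IsCompactOperator T) :
    ∃ Z : Submodule ℂ C₀(ℕ, ℂ), IsClosed (Z : Set C₀(ℕ, ℂ)) ∧
      ¬ FiniteDimensional ℂ Z ∧ Nonempty (Z ≃L[ℂ] C₀(ℕ, ℂ)) ∧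
      ∃ c > 0, ∀ z ∈ Z, c * ‖z‖ ≤ ‖T z‖ := by
  classical
  obtain ⟨δ', v, g, A, hδ', hv1, hvsupp, hord, hanchor, hgT, hsmall⟩ := exists_system T hT
  -- at most one block supports each coordinate
  have huniq : ∀ i r r', i ∈ A r → i ∈ A r' → r = r' := by
    intro i r r' hr hr'
    by_contra hne
    rcases lt_or_gt_of_ne hne with h | h
    · exact absurd rfl (hord r r' h i hr i hr').ne
    · exact absurd rfl (hord r' r h i hr' i hr).ne
  have hv_ne_supp : ∀ r i, v r i ≠ 0 → i ∈ A r := by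
    intro r i h
    by_contra hmem
    exact h (hvsupp r i hmem)
  -- partial sums
  set ps : C₀(ℕ, ℂ) → ℕ → C₀(ℕ, ℂ) := fun a n => ∑ r ∈ Finset.range n, a r • v r with hps
  have hps_coord : ∀ a n i, ps a n i = ∑ r ∈ Finset.range n, a r * v r i := by
    intro a n i
    rw [hps]
    dsimp only
    rw [coe_sum]
    apply Finset.sum_congr rfl
    intro r _
    rfl
  -- norm of block sums
  have hblock : ∀ (a : C₀(ℕ, ℂ)) (F : Finset ℕ) (C : ℝ), 0 ≤ C → (∀ r ∈ F, ‖a r‖ ≤ C) →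
      ‖∑ r ∈ F, a r • v r‖ ≤ C := by
    intro a F C hC0 hC
    apply norm_le_c0 _ hC0
    intro i
    rw [coe_sum]
    calc ‖∑ r ∈ F, (a r • v r) i‖ ≤ ∑ r ∈ F, ‖a r * v r i‖ := by
          apply norm_sum_le
    _ ≤ C := by
        by_cases hex : ∃ r₀ ∈ F, v r₀ i ≠ 0
        · obtain ⟨r₀, hr₀F, hr₀⟩ := hex
          rw [Finset.sum_eq_single r₀]
          · rw [norm_mul]
            calc ‖a r₀‖ * ‖v r₀ i‖ ≤ C * 1 := by
                  apply mul_le_mul (hC r₀ hr₀F) _ (norm_nonneg _) hC0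
                  calc ‖v r₀ i‖ ≤ ‖v r₀‖ := norm_apply_le _ _
                  _ = 1 := hv1 r₀
            _ = C := mul_one _
          · intro r hrF hne
            have : v r i = 0 := by
              by_contra h
              exact hne (huniq i r r₀ (hv_ne_supp r i h) (hv_ne_supp r₀ i hr₀))
            rw [this, mul_zero, norm_zero]
          · intro h; exact absurd hr₀F h
        · push_neg at hex
          rw [Finset.sum_eq_zero]
          · exact hC0
          · intro r hr
            rw [hex r hr, mul_zero, norm_zero]
  -- Cauchy and limit
  have hcauchy : ∀ a : C₀(ℕ, ℂ), CauchySeq (ps a) := by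
    intro a
    rw [Metric.cauchySeq_iff']
    intro η hη
    have : ∀ᶠ r in atTop, ‖a r‖ < η/2 := by
      have h2 : Tendsto (fun r => ‖a r‖) atTop (𝓝 0) := by
        simpa using (tendsto_apply_zero a).norm
      exact h2.eventually (eventually_lt_nhds (by linarith))
    obtain ⟨M, hM⟩ := this.exists_forall_of_atTop
    refine ⟨M, fun n hn => ?_⟩
    rw [dist_eq_norm]
    have hsub : Finset.range M ⊆ Finset.range n := by
      apply Finset.range_subset_range.2 hn
    have : ps a n - ps a M = ∑ r ∈ Finset.range n \ Finset.range M, a r • v r := by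
      rw [hps]
      dsimp only
      rw [eq_comm, Finset.sum_sdiff_eq_sub hsub]
    rw [this]
    calc ‖∑ r ∈ Finset.range n \ Finset.range M, a r • v r‖ ≤ η/2 := by
          apply hblock a _ _ (by linarith)
          intro r hr
          simp only [Finset.mem_sdiff, Finset.mem_range, not_lt] at hr
          exact (hM r hr.2).le
    _ < η := by linarith
  have hlim : ∀ a : C₀(ℕ, ℂ), ∃ z : C₀(ℕ, ℂ), Tendsto (ps a) atTop (𝓝 z) :=
    fun a => cauchySeq_tendsto_of_complete (hcauchy a)
  choose J0 hJ0 using hlim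
  -- coordinates of the limit
  have hcoordlim : ∀ a i, Tendsto (fun n => ps a n i) atTop (𝓝 (J0 a i)) := by
    intro a i
    rw [tendsto_iff_norm_sub_tendsto_zero]
    apply squeeze_zero (fun n => norm_nonneg _) (g := fun n => ‖ps a n - J0 a‖)
    · intro n
      have : ps a n i - J0 a i = (ps a n - J0 a) i := rfl
      rw [this]
      exact norm_apply_le _ i
    · have := (hJ0 a)
      rwa [tendsto_iff_norm_sub_tendsto_zero] at this
  have hJcoord : ∀ a r i, i ∈ A r → J0 a i = a r * v r i := by
    intro a r i hi
    have hstable : ∀ n, r < n → ps a n i = a r * v r i := by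
      intro n hn
      rw [hps_coord]
      rw [Finset.sum_eq_single r]
      · intro r' hr' hne
        have : v r' i = 0 := by
          by_contra h
          exact hne (huniq i r' r (hv_ne_supp r' i h) hi)
        rw [this, mul_zero]
      · intro h
        exact absurd (Finset.mem_range.2 hn) h
    have h1 : Tendsto (fun n => ps a n i) atTop (𝓝 (a r * v r i)) := by
      apply Tendsto.congr' _ tendsto_const_nhds
      filter_upwards [eventually_gt_atTop r] with n hn
      exact (hstable n hn).symm
    exact tendsto_nhds_unique (hcoordlim a i) h1
  -- J0 is an isometry
  have hJnorm : ∀ a, ‖J0 a‖ = ‖a‖ := by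
    intro a
    apply le_antisymm
    · apply le_of_tendsto (hJ0 a).norm
      filter_upwards with n
      exact hblock a _ _ (norm_nonneg a) (fun r _ => norm_apply_le a r)
    · apply norm_le_c0 _ (norm_nonneg _)
      intro r
      by_cases hvr : v r = 0
      · exfalso
        have := hv1 r
        rw [hvr, norm_zero] at this
        norm_num at this
      · obtain ⟨i, hi⟩ := exists_norm_apply_eq (v r) hvr
        rw [hv1 r] at hi
        have hiA : i ∈ A r := by
          apply hv_ne_supp
          intro h
          rw [h, norm_zero] at hi
          norm_num at hi
        calc ‖a r‖ = ‖a r‖ * ‖v r i‖ := by rw [hi, mul_one]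
        _ = ‖J0 a i‖ := by rw [hJcoord a r i hiA, norm_mul]
        _ ≤ ‖J0 a‖ := norm_apply_le _ _
  -- linearity
  have hJadd : ∀ a b, J0 (a + b) = J0 a + J0 b := by
    intro a b
    have h1 : ∀ n, ps (a + b) n = ps a n + ps b n := by
      intro n
      rw [hps]
      dsimp only
      rw [← Finset.sum_add_distrib]
      apply Finset.sum_congr rfl
      intro r _
      ext i
      show (a + b) r * v r i = a r * v r i + b r * v r i
      have : (a + b) r = a r + b r := rfl
      rw [this, add_mul]
    have h2 : Tendsto (ps (a + b)) atTop (𝓝 (J0 a + J0 b)) := by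
      have := (hJ0 a).add (hJ0 b)
      apply Tendsto.congr _ this
      intro n
      exact (h1 n).symm
    exact tendsto_nhds_unique (hJ0 (a + b)) h2
  have hJsmul : ∀ (c : ℂ) a, J0 (c • a) = c • J0 a := by
    intro c a
    have h1 : ∀ n, ps (c • a) n = c • ps a n := by
      intro n
      rw [hps]
      dsimp only
      rw [Finset.smul_sum]
      apply Finset.sum_congr rfl
      intro r _
      ext i
      show (c • a) r * v r i = c * (a r * v r i)
      have : (c • a) r = c * a r := rfl
      rw [this, mul_assoc]
    have h2 : Tendsto (ps (c • a)) atTop (𝓝 (c • J0 a)) := by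
      have := (hJ0 a).const_smul c
      apply Tendsto.congr _ this
      intro n
      exact (h1 n).symm
    exact tendsto_nhds_unique (hJ0 (c • a)) h2
  set J : C₀(ℕ, ℂ) →ₗᵢ[ℂ] C₀(ℕ, ℂ) :=
    { toFun := J0
      map_add' := hJadd
      map_smul' := hJsmul
      norm_map' := hJnorm } with hJ
  set Z : Submodule ℂ C₀(ℕ, ℂ) := LinearMap.range J.toLinearMap with hZ
  have hJZ : ∀ a, J0 a ∈ Z := fun a => ⟨a, rfl⟩
  refine ⟨Z, ?_, ?_, ?_, ⟨δ'/2, by positivity, ?_⟩⟩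
  · -- closed
    have : (Z : Set C₀(ℕ, ℂ)) = Set.range J := by
      rw [hZ]
      ext x
      simp [LinearMap.mem_range]
    rw [this]
    exact (J.isometry.isClosedEmbedding).isClosed_range
  · -- infinite-dimensional
    intro hfin
    have hequiv : C₀(ℕ, ℂ) ≃ₗ[ℂ] Z := J.equivRange.toLinearEquiv
    have : FiniteDimensional ℂ C₀(ℕ, ℂ) := Module.Finite.equiv hequiv.symm
    have hli : LinearIndependent ℂ e := by
      rw [linearIndependent_iff']
      intro S l hsum j hj
      have := congrArg (fun x : C₀(ℕ, ℂ) => x j) hsum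
      rw [coe_sum] at this
      rw [Finset.sum_eq_single j] at this
      · simpa using this
      · intro i hi hne
        show l i * e i j = 0
        simp [e_apply, hne.symm]
      · intro h; exact absurd hj h
    exact Module.Finite.not_linearIndependent_of_infinite e hli
  · -- isomorphic to c₀
    exact ⟨(J.equivRange.symm).toContinuousLinearEquiv⟩
  · -- lower bound
    rintro z ⟨a, rfl⟩
    show δ'/2 * ‖J0 a‖ ≤ ‖T (J0 a)‖
    by_cases ha : a = 0
    · have h0 : ‖J0 (0 : C₀(ℕ, ℂ))‖ = 0 := by rw [hJnorm]; simp
      have : J0 a = 0 := by rw [ha]; exact norm_eq_zero.1 h0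
      rw [this]
      simp
    · obtain ⟨r₀, hr₀⟩ := exists_norm_apply_eq a ha
      -- estimate on partial sums
      have hkey : ∀ n, r₀ < n → δ'/2 * ‖a‖ ≤ ‖g r₀ (ps a n)‖ := by
        intro n hn
        have hgps : g r₀ (ps a n) = ∑ r ∈ Finset.range n, a r * g r₀ (v r) := by
          rw [hps]
          dsimp only
          rw [map_sum]
          apply Finset.sum_congr rfl
          intro r _
          rw [map_smul, smul_eq_mul]
        have hmem : r₀ ∈ Finset.range n := Finset.mem_range.2 hn
        rw [hgps, ← Finset.add_sum_erase _ _ hmem]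
        have hrest : ‖∑ r ∈ (Finset.range n).erase r₀, a r * g r₀ (v r)‖ ≤ δ'/2 * ‖a‖ := by
          calc ‖∑ r ∈ (Finset.range n).erase r₀, a r * g r₀ (v r)‖
              ≤ ∑ r ∈ (Finset.range n).erase r₀, ‖a r * g r₀ (v r)‖ := norm_sum_le _ _
          _ ≤ ∑ r ∈ (Finset.range n).erase r₀, ‖a‖ * (∑ i ∈ A r, ‖g r₀ (e i)‖) := by
              apply Finset.sum_le_sum
              intro r hr
              rw [norm_mul]
              apply mul_le_mul (norm_apply_le a r) _ (norm_nonneg _) (norm_nonneg a)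
              -- ‖g r₀ (v r)‖ ≤ mass
              have := eval_finsupp (g r₀) (v r) (A r) (hvsupp r)
              rw [this]
              calc ‖∑ i ∈ A r, v r i * g r₀ (e i)‖ ≤ ∑ i ∈ A r, ‖v r i * g r₀ (e i)‖ :=
                    norm_sum_le _ _
              _ ≤ ∑ i ∈ A r, ‖g r₀ (e i)‖ := by
                  apply Finset.sum_le_sum
                  intro i _
                  rw [norm_mul]
                  calc ‖v r i‖ * ‖g r₀ (e i)‖ ≤ 1 * ‖g r₀ (e i)‖ := by
                        apply mul_le_mul_of_nonneg_right _ (norm_nonneg _)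
                        calc ‖v r i‖ ≤ ‖v r‖ := norm_apply_le _ _
                        _ = 1 := hv1 r
                  _ = ‖g r₀ (e i)‖ := one_mul _
          _ = ‖a‖ * ∑ r ∈ (Finset.range n).erase r₀, (∑ i ∈ A r, ‖g r₀ (e i)‖) := by
              rw [Finset.mul_sum]
          _ ≤ ‖a‖ * (δ'/2) := by
              apply mul_le_mul_of_nonneg_left _ (norm_nonneg a)
              exact hsmall r₀ _ (Finset.notMem_erase r₀ _)
          _ = δ'/2 * ‖a‖ := mul_comm _ _
        have hfirst : δ' * ‖a‖ ≤ ‖a r₀ * g r₀ (v r₀)‖ := by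
          rw [norm_mul, hr₀, mul_comm ‖a‖ ‖g r₀ (v r₀)‖, mul_comm δ' ‖a‖, mul_comm ‖g r₀ (v r₀)‖ ‖a‖]
          exact mul_le_mul_of_nonneg_left (hanchor r₀) (norm_nonneg a)
        calc δ'/2 * ‖a‖ = δ' * ‖a‖ - δ'/2 * ‖a‖ := by ring
        _ ≤ ‖a r₀ * g r₀ (v r₀)‖ - ‖∑ r ∈ (Finset.range n).erase r₀, a r * g r₀ (v r)‖ := by
            linarith
        _ ≤ ‖a r₀ * g r₀ (v r₀) + ∑ r ∈ (Finset.range n).erase r₀, a r * g r₀ (v r)‖ := by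
            have h4 := norm_le_add_norm_add (a r₀ * g r₀ (v r₀))
              (∑ r ∈ (Finset.range n).erase r₀, a r * g r₀ (v r))
            linarith
      -- pass to the limit
      have htend : Tendsto (fun n => ‖g r₀ (ps a n)‖) atTop (𝓝 ‖g r₀ (J0 a)‖) :=
        (((g r₀).continuous.tendsto _).comp (hJ0 a)).norm
      have hlow : δ'/2 * ‖a‖ ≤ ‖g r₀ (J0 a)‖ := by
        apply ge_of_tendsto htend
        filter_upwards [eventually_gt_atTop r₀] with n hn
        exact hkey n hn
      calc δ'/2 * ‖J0 a‖ = δ'/2 * ‖a‖ := by rw [hJnorm]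
      _ ≤ ‖g r₀ (J0 a)‖ := hlow
      _ ≤ ‖T (J0 a)‖ := hgT r₀ (J0 a)
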